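/- (Caccioppoli-type consequence) Let u ∈ C²(Ω) be bounded on an open set Ω ⊆ ℝ^{n+1} and satisfy |u Δu| ≤ θ|∇u|² with 0 < θ < 1. Then for every ball B(z, r) with B(z, 2r) ⊆ Ω, one has ∫_{B(z,r)} |∇u|² ≤ C(n, θ) r^{n−1} ‖u‖_∞², equivalently the mean value of |∇u|² over B(z,r) is at most C(n,θ)‖u‖_∞²/r². -/

import Mathlib

open MeasureTheory Metric Set
open scoped Classical
set_option maxHeartbeats 1000000

namespace CaccAux

noncomputable def phi1 : ContDiffBump (0:ℝ) := ⟨1, 3/2, one_pos, by norm_num⟩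

noncomputable def eta1 (m : ℕ) : (Fin m → ℝ) → ℝ := fun x => ∏ i, phi1 (x i)

lemma eta1_contDiff (m : ℕ) : ContDiff ℝ 2 (eta1 m) := by
  apply contDiff_prod
  intro i _
  exact phi1.contDiff.comp (contDiff_apply ℝ ℝ i)

lemma eta1_one {m : ℕ} {x : Fin m → ℝ} (h : ∀ i, |x i| ≤ 1) : eta1 m x = 1 := by
  unfold eta1
  apply Finset.prod_eq_one
  intro i _
  exact phi1.one_of_mem_closedBall (by simpa [Real.dist_eq, phi1] using h i)

lemma eta1_zero {m : ℕ} {x : Fin m → ℝ} (h : ∃ i, 3/2 ≤ |x i|) : eta1 m x = 0 := by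
  obtain ⟨i, hi⟩ := h
  exact Finset.prod_eq_zero (Finset.mem_univ i)
    (phi1.zero_of_le_dist (by simpa [Real.dist_eq, phi1] using hi))

lemma eta1_nonneg {m : ℕ} (x : Fin m → ℝ) : 0 ≤ eta1 m x :=
  Finset.prod_nonneg fun i _ => phi1.nonneg

lemma eta1_le_one {m : ℕ} (x : Fin m → ℝ) : eta1 m x ≤ 1 :=
  Finset.prod_le_one (fun _ _ => phi1.nonneg) (fun _ _ => phi1.le_one)

def U (m : ℕ) : Set (Fin m → ℝ) := {x | ∃ i, 3/2 < |x i|}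

lemma U_open (m : ℕ) : IsOpen (U m) := by
  have : U m = ⋃ i, {x : Fin m → ℝ | 3/2 < |x i|} := by
    ext x; simp [U]
  rw [this]
  exact isOpen_iUnion fun i =>
    (isOpen_lt continuous_const ((continuous_abs.comp (continuous_apply i))))

lemma eta1_zero_on_U {m : ℕ} {x : Fin m → ℝ} (h : x ∈ U m) : eta1 m x = 0 :=
  eta1_zero ⟨h.choose, h.choose_spec.le⟩

lemma exists_K (m : ℕ) : ∃ K : ℝ, 0 < K ∧ ∀ x, ‖fderiv ℝ (eta1 m) x‖ ≤ K := by
  have hcont : Continuous fun x => ‖fderiv ℝ (eta1 m) x‖ :=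
    ((eta1_contDiff m).continuous_fderiv (by norm_num)).norm
  obtain ⟨K0, hK0⟩ := (isCompact_closedBall (0 : Fin m → ℝ) (3/2)).exists_bound_of_continuousOn
    hcont.continuousOn
  refine ⟨max K0 0 + 1, by positivity, fun x => ?_⟩
  by_cases hx : x ∈ closedBall (0 : Fin m → ℝ) (3/2)
  · have := hK0 x hx
    rw [norm_norm] at this
    linarith [le_max_left K0 0]
  · have hxU : x ∈ U m := by
      by_contra hU
      apply hx
      simp only [U, mem_setOf_eq, not_exists, not_lt] at hU
      exact mem_closedBall_zero_iff.2 (by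
        apply (pi_norm_le_iff_of_nonneg (by norm_num)).2
        intro i
        simpa [Real.norm_eq_abs] using hU i)
    have : fderiv ℝ (eta1 m) x = 0 := by
      have hev : eta1 m =ᶠ[nhds x] (fun _ => 0) :=
        Filter.eventuallyEq_of_mem ((U_open m).mem_nhds hxU) (fun y hy => eta1_zero_on_U hy)
      rw [hev.fderiv_eq, fderiv_fun_const]
      rfl
    rw [this]
    simp
    positivity

lemma young {a t ε : ℝ} (hε : 0 < ε) : 2*a*t ≤ ε*a^2 + t^2/ε := by
  rw [← sub_nonneg]
  have key : ε * (ε*a^2 + t^2/ε - 2*a*t) = (ε*a - t)^2 := by field_simp; ring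
  nlinarith [sq_nonneg (ε*a - t)]

/-- Core Caccioppoli estimate on a cube, proved via the divergence theorem. -/
lemma core {n : ℕ} (O : Set (Fin (n+1) → ℝ)) (hO : IsOpen O)
    (W : (Fin (n+1) → ℝ) → ℝ) (hW : ContDiffOn ℝ 2 W O)
    (θ M K : ℝ) (hθ0 : 0 < θ) (hθ1 : θ < 1) (hM0 : 0 ≤ M)
    (hM : ∀ x ∈ O, |W x| ≤ M)
    (hK : 0 < K) (hKb : ∀ x, ‖fderiv ℝ (eta1 (n+1)) x‖ ≤ K)
    (hcond : ∀ x ∈ O,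
      |W x * ∑ i, fderiv ℝ (fun y => fderiv ℝ W y (Pi.single i 1)) x (Pi.single i 1)|
        ≤ θ * ∑ i, (fderiv ℝ W x (Pi.single i 1))^2)
    (c : Fin (n+1) → ℝ) (h : ℝ) (hh : 0 < h)
    (hsub : {x : Fin (n+1) → ℝ | ∀ i, |x i - c i| ≤ 3/2 * h} ⊆ O) :
    ∫ x in Icc (fun i => c i - h) (fun i => c i + h),
        ∑ i, (fderiv ℝ W x (Pi.single i 1))^2
      ≤ (4*(n+1)*K^2/(1-θ)^2) * 4^(n+1) * M^2 * h^(n+1) / h^2 := by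
  have h1θ : 0 < 1 - θ := by linarith
  -- the cutoff
  set η : (Fin (n+1) → ℝ) → ℝ := fun x => eta1 (n+1) (h⁻¹ • (x - c)) with hη_def
  have hA : ∀ x : Fin (n+1) → ℝ, HasFDerivAt (fun x : Fin (n+1) → ℝ => h⁻¹ • (x - c))
      (h⁻¹ • ContinuousLinearMap.id ℝ (Fin (n+1) → ℝ)) x := fun x =>
    ((hasFDerivAt_id x).sub_const c).const_smul h⁻¹
  have hηd : ∀ x, HasFDerivAt η
      ((fderiv ℝ (eta1 (n+1)) (h⁻¹ • (x - c))).comp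
        (h⁻¹ • ContinuousLinearMap.id ℝ (Fin (n+1) → ℝ))) x := fun x =>
    (((eta1_contDiff (n+1)).differentiable (by norm_num)) _).hasFDerivAt.comp x (hA x)
  set Dη : (Fin (n+1) → ℝ) → (Fin (n+1) → ℝ) →L[ℝ] ℝ := fun x => fderiv ℝ η x with hDη_def
  have hDη : ∀ x, Dη x = (fderiv ℝ (eta1 (n+1)) (h⁻¹ • (x - c))).comp
      (h⁻¹ • ContinuousLinearMap.id ℝ (Fin (n+1) → ℝ)) := fun x => (hηd x).fderiv
  have hηd' : ∀ x, HasFDerivAt η (Dη x) x := fun x => (hDη x) ▸ hηd x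
  have hDη_le : ∀ x (v : Fin (n+1) → ℝ), |Dη x v| ≤ K/h * ‖v‖ := by
    intro x v
    have h1 : ‖Dη x‖ ≤ K/h := by
      rw [hDη]
      refine le_trans (ContinuousLinearMap.opNorm_comp_le _ _) ?_
      have h2 : ‖h⁻¹ • ContinuousLinearMap.id ℝ (Fin (n+1) → ℝ)‖ ≤ |h⁻¹| := by
        refine le_trans (ContinuousLinearMap.opNorm_smul_le _ _) ?_
        rw [Real.norm_eq_abs]
        calc |h⁻¹| * ‖ContinuousLinearMap.id ℝ (Fin (n+1) → ℝ)‖ ≤ |h⁻¹| * 1 :=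
              mul_le_mul_of_nonneg_left ContinuousLinearMap.norm_id_le (abs_nonneg _)
          _ = |h⁻¹| := mul_one _
      have h3 := mul_le_mul (hKb (h⁻¹ • (x - c))) h2 (norm_nonneg _) (le_of_lt hK)
      refine le_trans h3 ?_
      rw [abs_of_pos (inv_pos.2 hh), div_eq_mul_inv]
    have h4 := (Dη x).le_opNorm v
    rw [Real.norm_eq_abs] at h4
    exact le_trans h4 (mul_le_mul_of_nonneg_right h1 (norm_nonneg _))
  have hη_cont : Continuous η :=
    ((eta1_contDiff (n+1)).continuous).comp ((continuous_id.sub continuous_const).const_smul h⁻¹)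
  have hη_smooth : ContDiff ℝ 2 η :=
    (eta1_contDiff (n+1)).comp (((contDiff_id.sub contDiff_const).const_smul h⁻¹))
  have hcoord : ∀ (x : Fin (n+1) → ℝ) i, (h⁻¹ • (x - c)) i = h⁻¹ * (x i - c i) := by
    intro x i; rfl
  have habs : ∀ (x : Fin (n+1) → ℝ) i, |(h⁻¹ • (x - c)) i| = |x i - c i| / h := by
    intro x i
    rw [hcoord, abs_mul, abs_inv, abs_of_pos hh]
    ring
  have hη_one : ∀ x, (∀ i, |x i - c i| ≤ h) → η x = 1 := by
    intro x hx
    apply eta1_one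
    intro i
    rw [habs, div_le_one hh]
    exact hx i
  have hη_nonneg : ∀ x, 0 ≤ η x := fun x => eta1_nonneg _
  have hη_le_one : ∀ x, η x ≤ 1 := fun x => eta1_le_one _
  -- the open set where the cutoff vanishes
  set Uc : Set (Fin (n+1) → ℝ) := {x | ∃ i, 3/2 * h < |x i - c i|} with hUc_def
  have hUc_open : IsOpen Uc := by
    have : Uc = ⋃ i, {x : Fin (n+1) → ℝ | 3/2 * h < |x i - c i|} := by ext x; simp [hUc_def]
    rw [this]
    refine isOpen_iUnion fun i => isOpen_lt continuous_const ?_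
    exact continuous_abs.comp ((continuous_apply i).sub continuous_const)
  have hη_zero' : ∀ x : Fin (n+1) → ℝ, (∃ i, 3/2 * h ≤ |x i - c i|) → η x = 0 := by
    intro x hxe
    obtain ⟨i, hi⟩ := hxe
    apply eta1_zero
    exact ⟨i, by rw [habs, le_div_iff₀ hh]; linarith⟩
  have hη_zero_Uc : ∀ x ∈ Uc, η x = 0 := by
    intro x hx
    obtain ⟨i, hi⟩ := hx
    exact hη_zero' x ⟨i, hi.le⟩
  have hTUc : ∀ x : Fin (n+1) → ℝ, x ∉ O → x ∈ Uc := by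
    intro x hx
    by_contra hc
    apply hx
    apply hsub
    intro i
    by_contra hi
    exact hc ⟨i, by push_neg at hi; exact hi⟩
  -- derivative notation
  set pd : Fin (n+1) → (Fin (n+1) → ℝ) → ℝ := fun i x => fderiv ℝ W x (Pi.single i 1) with hpd_def
  set G : (Fin (n+1) → ℝ) → ℝ := fun x => ∑ i, (pd i x)^2 with hG_def
  set P : (Fin (n+1) → ℝ) → ℝ := fun x => η x * η x * W x with hP_def
  set V : (Fin (n+1) → ℝ) → (Fin (n+1) → ℝ) := fun x i => P x * pd i x with hV_def
  set DP : (Fin (n+1) → ℝ) → (Fin (n+1) → ℝ) →L[ℝ] ℝ := fun x => fderiv ℝ P x with hDP_def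
  set Dpd : Fin (n+1) → (Fin (n+1) → ℝ) → (Fin (n+1) → ℝ) →L[ℝ] ℝ :=
    fun i x => fderiv ℝ (pd i) x with hDpd_def
  have hcond' : ∀ x ∈ O, |W x * ∑ i, Dpd i x (Pi.single i 1)| ≤ θ * G x := by
    intro x hx
    exact hcond x hx
  -- basic regularity on O
  have hWdiff : ∀ x ∈ O, DifferentiableAt ℝ W x := by
    intro x hx
    exact (hW.contDiffAt (hO.mem_nhds hx)).differentiableAt (by norm_num)
  have hWcont : ContinuousOn W O := hW.continuousOn
  have hpdC : ∀ i, ContDiffOn ℝ 1 (pd i) O := by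
    intro i
    exact (hW.fderiv_of_isOpen hO (by norm_num)).clm_apply contDiffOn_const
  have hpd_diff : ∀ i, ∀ x ∈ O, DifferentiableAt ℝ (pd i) x := by
    intro i x hx
    exact (((hpdC i).contDiffAt (hO.mem_nhds hx)).differentiableAt (by norm_num))
  have hpd_cont : ∀ i, ContinuousOn (pd i) O := fun i => (hpdC i).continuousOn
  have hDpd_cont : ∀ i, ContinuousOn (Dpd i) O :=
    fun i => (hpdC i).continuousOn_fderiv_of_isOpen hO (le_refl 1)
  have hPC : ContDiffOn ℝ 2 P O :=
    ((hη_smooth.contDiffOn.mul hη_smooth.contDiffOn).mul hW)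
  have hP_diff : ∀ x ∈ O, DifferentiableAt ℝ P x := by
    intro x hx
    exact ((((hηd' x).differentiableAt.mul (hηd' x).differentiableAt)).mul (hWdiff x hx))
  have hPd : ∀ x ∈ O, HasFDerivAt P (DP x) x := fun x hx => (hP_diff x hx).hasFDerivAt
  have hDP_cont : ContinuousOn DP O := hPC.continuousOn_fderiv_of_isOpen hO (by norm_num)
  have hDP_eq : ∀ x ∈ O, DP x = (η x * η x) • fderiv ℝ W x +
      W x • (η x • Dη x + η x • Dη x) := by
    intro x hx
    have h5 := (((hηd' x).mul (hηd' x)).mul (hWdiff x hx).hasFDerivAt)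
    exact (hPd x hx).unique h5
  -- the vector field has derivative L x at points of O
  set L : (Fin (n+1) → ℝ) → (Fin (n+1) → ℝ) →L[ℝ] (Fin (n+1) → ℝ) :=
    fun x => ContinuousLinearMap.pi (fun i => P x • Dpd i x + pd i x • DP x) with hL_def
  have hVd : ∀ x ∈ O, HasFDerivAt V (L x) x := by
    intro x hx
    apply hasFDerivAt_pi.2
    intro i
    exact (hPd x hx).mul ((hpd_diff i x hx).hasFDerivAt)
  -- V vanishes on Uc
  have hV_zero : ∀ x ∈ Uc, V x = 0 := by
    intro x hx
    funext i
    simp [hV_def, hP_def, hη_zero_Uc x hx]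
  have hVd_zero : ∀ x ∈ Uc, HasFDerivAt V (0 : (Fin (n+1) → ℝ) →L[ℝ] (Fin (n+1) → ℝ)) x := by
    intro x hx
    have hev : V =ᶠ[nhds x] (fun _ => (0 : Fin (n+1) → ℝ)) :=
      Filter.eventuallyEq_of_mem (hUc_open.mem_nhds hx) (fun y hy => hV_zero y hy)
    exact (hasFDerivAt_const (0 : Fin (n+1) → ℝ) x).congr_of_eventuallyEq hev
  -- the box
  set a : Fin (n+1) → ℝ := fun i => c i - 2*h with ha_def
  set b : Fin (n+1) → ℝ := fun i => c i + 2*h with hb_def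
  have hab : a ≤ b := by intro i; show c i - 2*h ≤ c i + 2*h; linarith
  -- piecewise derivative and divergence
  set f' : (Fin (n+1) → ℝ) → (Fin (n+1) → ℝ) →L[ℝ] (Fin (n+1) → ℝ) :=
    fun x => if x ∈ O then L x else 0 with hf'_def
  set F : (Fin (n+1) → ℝ) → ℝ := fun x =>
    if x ∈ O then ∑ i, (P x * Dpd i x (Pi.single i 1) + pd i x * DP x (Pi.single i 1)) else 0
    with hF_def
  have hFf' : (fun x => ∑ i, f' x (Pi.single i 1) i) = F := by
    funext x
    by_cases hx : x ∈ O
    · simp only [hf'_def, hF_def, if_pos hx, hL_def, ContinuousLinearMap.pi_apply,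
        ContinuousLinearMap.add_apply, ContinuousLinearMap.coe_smul', Pi.smul_apply,
        smul_eq_mul]
    · simp [hf'_def, hF_def, if_neg hx]
  -- continuity of V on the box
  have hVcO : ContinuousOn V O := by
    apply continuousOn_pi.2
    intro i
    exact ((hη_cont.continuousOn.mul hη_cont.continuousOn).mul hWcont).mul (hpd_cont i)
  have hVc : ContinuousOn V (Icc a b) := by
    intro x hx
    by_cases hxO : x ∈ O
    · exact (hVcO.continuousAt (hO.mem_nhds hxO)).continuousWithinAt
    · have hxU := hTUc x hxO
      have hev : V =ᶠ[nhds x] (fun _ => (0 : Fin (n+1) → ℝ)) :=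
        Filter.eventuallyEq_of_mem (hUc_open.mem_nhds hxU) (fun y hy => hV_zero y hy)
      exact ((continuousAt_congr hev).2 continuousAt_const).continuousWithinAt
  -- F vanishes on Uc
  have hDP_zero : ∀ x ∈ Uc, DP x = 0 := by
    intro x hx
    have hev : P =ᶠ[nhds x] (fun _ => (0:ℝ)) :=
      Filter.eventuallyEq_of_mem (hUc_open.mem_nhds hx)
        (fun y hy => by simp [hP_def, hη_zero_Uc y hy])
    rw [hDP_def]
    simp only
    rw [hev.fderiv_eq]
    exact fderiv_const_apply 0
  have hF_zero : ∀ x ∈ Uc, F x = 0 := by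
    intro x hx
    by_cases hxO : x ∈ O
    · simp only [hF_def, if_pos hxO]
      apply Finset.sum_eq_zero
      intro i _
      simp [hP_def, hη_zero_Uc x hx, hDP_zero x hx]
    · simp [hF_def, if_neg hxO]
  -- continuity of F on the box
  have hFcont : ContinuousOn F (Icc a b) := by
    intro x hx
    by_cases hxO : x ∈ O
    · have hev : F =ᶠ[nhds x] (fun y =>
          ∑ i, (P y * Dpd i y (Pi.single i 1) + pd i y * DP y (Pi.single i 1))) :=
        Filter.eventuallyEq_of_mem (hO.mem_nhds hxO) (fun y hy => by simp [hF_def, if_pos hy])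
      have hcO : ContinuousOn (fun y =>
          ∑ i, (P y * Dpd i y (Pi.single i 1) + pd i y * DP y (Pi.single i 1))) O := by
        apply continuousOn_finset_sum
        intro i _
        apply ContinuousOn.add
        · exact (((hη_cont.continuousOn.mul hη_cont.continuousOn).mul hWcont)).mul
            ((hDpd_cont i).clm_apply continuousOn_const)
        · exact (hpd_cont i).mul (hDP_cont.clm_apply continuousOn_const)
      exact ((continuousAt_congr hev.symm).1
        (hcO.continuousAt (hO.mem_nhds hxO))).continuousWithinAt
    · have hxU := hTUc x hxO
      have hev : F =ᶠ[nhds x] (fun _ => (0:ℝ)) :=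
        Filter.eventuallyEq_of_mem (hUc_open.mem_nhds hxU) (fun y hy => hF_zero y hy)
      exact ((continuousAt_congr hev).2 continuousAt_const).continuousWithinAt
  have hFint : IntegrableOn F (Icc a b) := hFcont.integrableOn_compact isCompact_Icc
  -- the divergence theorem
  have hdiv := integral_divergence_of_hasFDerivAt_off_countable (a := a) (b := b) hab V f' ∅
    countable_empty hVc
    (by
      intro x hx
      rw [mem_diff] at hx
      by_cases hxO : x ∈ O
      · rw [hf'_def]; simp only [if_pos hxO]; exact hVd x hxO
      · rw [hf'_def]; simp only [if_neg hxO]; exact hVd_zero x (hTUc x hxO))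
    (by rw [hFf']; exact hFint)
  -- the boundary terms vanish
  have hfaces : ∀ (i : Fin (n+1)) (t : ℝ), 3/2*h ≤ |t - c i| →
      ∀ (y : Fin n → ℝ), V (i.insertNth t y) i = 0 := by
    intro i t ht y
    have hz : η (i.insertNth t y) = 0 := by
      apply hη_zero'
      exact ⟨i, by rw [Fin.insertNth_apply_same]; exact ht⟩
    simp [hV_def, hP_def, hz]
  have hint0 : ∫ x in Icc a b, F x = 0 := by
    rw [← hFf', hdiv]
    apply Finset.sum_eq_zero
    intro i _
    have h1 : ∀ y : Fin n → ℝ, V (i.insertNth (b i) y) i = 0 := by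
      intro y
      apply hfaces
      rw [hb_def]
      simp only
      rw [show c i + 2*h - c i = 2*h by ring, abs_of_pos (by linarith)]
      linarith
    have h2 : ∀ y : Fin n → ℝ, V (i.insertNth (a i) y) i = 0 := by
      intro y
      apply hfaces
      rw [ha_def]
      simp only
      rw [show c i - 2*h - c i = -(2*h) by ring, abs_neg, abs_of_pos (by linarith)]
      linarith
    simp [h1, h2]
  -- pointwise lower bound for F
  set g : (Fin (n+1) → ℝ) → ℝ := fun x => if x ∈ O then η x * η x * G x else 0 with hg_def
  set D : ℝ := 2*(n+1)*M^2*K^2/((1-θ)*h^2) with hD_def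
  have hD0 : 0 ≤ D := by
    rw [hD_def]
    positivity
  have hG_nonneg : ∀ x, 0 ≤ G x := fun x => Finset.sum_nonneg fun i _ => sq_nonneg _
  have hg_nonneg : ∀ x, 0 ≤ g x := by
    intro x
    rw [hg_def]
    by_cases hx : x ∈ O
    · simp only [if_pos hx]
      have h6 : 0 ≤ G x := hG_nonneg x
      have h7 := hη_nonneg x
      positivity
    · simp [if_neg hx]
  have hsn : ∀ i : Fin (n+1), ‖(Pi.single i 1 : Fin (n+1) → ℝ)‖ = 1 := by
    intro i
    simp [Pi.norm_single]
  have hLB : ∀ x ∈ Icc a b, (1-θ)/2 * g x - D ≤ F x := by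
    intro x _
    by_cases hxO : x ∈ O
    · rw [hF_def, hg_def]
      simp only [if_pos hxO]
      have hDPv : ∀ i : Fin (n+1), DP x (Pi.single i 1) = (η x * η x) * pd i x +
          W x * (η x * Dη x (Pi.single i 1) + η x * Dη x (Pi.single i 1)) := by
        intro i
        rw [hDP_eq x hxO]
        simp only [ContinuousLinearMap.add_apply, ContinuousLinearMap.coe_smul', Pi.smul_apply,
          smul_eq_mul]
        try ring
      -- split the divergence
      have hsplit : ∑ i, (P x * Dpd i x (Pi.single i 1) + pd i x * DP x (Pi.single i 1))
          = P x * (∑ i, Dpd i x (Pi.single i 1)) + ∑ i, pd i x * DP x (Pi.single i 1) := by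
        rw [Finset.sum_add_distrib, ← Finset.mul_sum]
      rw [hsplit]
      -- bound for the Laplacian part
      have hηη : (0:ℝ) ≤ η x * η x := mul_nonneg (hη_nonneg x) (hη_nonneg x)
      have hWΔ := hcond' x hxO
      have e1 : -(θ * (η x * η x * G x)) ≤ P x * (∑ i, Dpd i x (Pi.single i 1)) := by
        have h8 : -(θ * G x) ≤ W x * ∑ i, Dpd i x (Pi.single i 1) := by
          have := (abs_le.1 hWΔ).1
          linarith
        have h9 := mul_le_mul_of_nonneg_left h8 hηη
        rw [hP_def]
        simp only
        nlinarith [h9]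
      -- bound for the gradient parts
      have e2 : ∀ i : Fin (n+1), (1+θ)/2 * (η x * η x * (pd i x)^2)
          - 2*M^2*K^2/((1-θ)*h^2) ≤ pd i x * DP x (Pi.single i 1) := by
        intro i
        rw [hDPv i]
        set p := pd i x with hp
        set w := W x with hw
        set e := η x with he
        set d := Dη x (Pi.single i 1) with hd
        have hd_le : |d| ≤ K/h := by
          have := hDη_le x (Pi.single i 1)
          rwa [hsn i, mul_one] at this
        have hw_le : |w| ≤ M := hM x hxO
        have he0 : 0 ≤ e := hη_nonneg x
        clear_value p w e d
        have q1 : |p| * |w| ≤ |p| * M := mul_le_mul_of_nonneg_left hw_le (abs_nonneg p)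
        have q2 : |p| * |w| * |d| ≤ |p| * M * (K/h) :=
          mul_le_mul q1 hd_le (abs_nonneg d) (by positivity)
        have q3 : -(|p| * M * (K/h)) ≤ p*(w*d) := by
          have h10 := neg_abs_le (p*(w*d))
          have h11 : |p*(w*d)| = |p| * |w| * |d| := by rw [abs_mul, abs_mul]; ring
          rw [h11] at h10
          linarith
        have q4 : -(2*e*(|p| * M * (K/h))) ≤ 2*e*(p*(w*d)) :=
          le_trans (by nlinarith [mul_le_mul_of_nonneg_left q3 (by linarith : (0:ℝ) ≤ 2*e)])
            (le_refl _)
        have hy := young (a := e * |p|) (t := M*(K/h)) (ε := (1-θ)/2) (by linarith)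
        have hc1 : (M*(K/h))^2/((1-θ)/2) = 2*M^2*K^2/((1-θ)*h^2) := by
          field_simp
        have q5 : (e * |p|)^2 = e*e*p^2 := by rw [mul_pow, sq_abs]; ring
        have q6 : p*((e*e)*p + w*(e*d + e*d)) = e*e*p^2 + 2*e*(p*(w*d)) := by ring
        have q7 : 2*e*(|p| * M * (K/h)) = 2*(e * |p|)*(M*(K/h)) := by ring
        rw [q6]
        rw [hc1] at hy
        rw [q5] at hy
        rw [q7] at q4
        linarith [hy, q4, mul_nonneg (mul_nonneg he0 he0) (sq_nonneg p)]
      -- sum up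
      have e3 : ∑ i : Fin (n+1), ((1+θ)/2 * (η x * η x * (pd i x)^2) - 2*M^2*K^2/((1-θ)*h^2))
          ≤ ∑ i, pd i x * DP x (Pi.single i 1) := Finset.sum_le_sum (fun i _ => e2 i)
      have e4 : ∑ i : Fin (n+1), ((1+θ)/2 * (η x * η x * (pd i x)^2) - 2*M^2*K^2/((1-θ)*h^2))
          = (1+θ)/2 * (η x * η x * G x) - D := by
        rw [Finset.sum_sub_distrib]
        have ha1 : ∑ i : Fin (n+1), (1+θ)/2 * (η x * η x * (pd i x)^2)
            = (1+θ)/2 * (η x * η x * G x) := by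
          rw [hG_def]
          simp only [Finset.mul_sum]
          try refine Finset.sum_congr rfl fun i _ => ?_
          try ring
        have ha2 : ∑ _i : Fin (n+1), (2*M^2*K^2/((1-θ)*h^2) : ℝ) = D := by
          rw [Finset.sum_const, Finset.card_univ, Fintype.card_fin, nsmul_eq_mul, hD_def]
          push_cast
          field_simp
        rw [ha1, ha2]
      rw [e4] at e3
      linarith
    · rw [hF_def, hg_def]
      simp only [if_neg hxO]
      linarith
  -- continuity and integrability of g
  have hg_zero : ∀ x ∈ Uc, g x = 0 := by
    intro x hx
    rw [hg_def]
    by_cases hxO : x ∈ O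
    · simp [if_pos hxO, hη_zero_Uc x hx]
    · simp [if_neg hxO]
  have hgcont : ContinuousOn g (Icc a b) := by
    intro x hx
    by_cases hxO : x ∈ O
    · have hev : g =ᶠ[nhds x] (fun y => η y * η y * G y) :=
        Filter.eventuallyEq_of_mem (hO.mem_nhds hxO) (fun y hy => by simp [hg_def, if_pos hy])
      have hcO : ContinuousOn (fun y => η y * η y * G y) O := by
        apply (hη_cont.continuousOn.mul hη_cont.continuousOn).mul
        apply continuousOn_finset_sum
        intro i _
        exact (hpd_cont i).pow 2
      exact ((continuousAt_congr hev.symm).1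
        (hcO.continuousAt (hO.mem_nhds hxO))).continuousWithinAt
    · have hxU := hTUc x hxO
      have hev : g =ᶠ[nhds x] (fun _ => (0:ℝ)) :=
        Filter.eventuallyEq_of_mem (hUc_open.mem_nhds hxU) (fun y hy => hg_zero y hy)
      exact ((continuousAt_congr hev).2 continuousAt_const).continuousWithinAt
  have hgint : IntegrableOn g (Icc a b) := hgcont.integrableOn_compact isCompact_Icc
  have hvolfin : volume (Icc a b) < ⊤ := isCompact_Icc.measure_lt_top
  have hvol : (volume (Icc a b)).toReal = (4*h)^(n+1) := by
    rw [Real.volume_Icc_pi_toReal hab]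
    have h12 : ∀ i : Fin (n+1), b i - a i = 4*h := by
      intro i; rw [ha_def, hb_def]; simp only; ring
    simp [h12]
  -- integrate the pointwise bound
  have hmono : ∫ x in Icc a b, ((1-θ)/2 * g x - D) ≤ ∫ x in Icc a b, F x :=
    setIntegral_mono_on ((hgint.const_mul _).sub (integrableOn_const hvolfin.ne))
      hFint measurableSet_Icc hLB
  have heval : ∫ x in Icc a b, ((1-θ)/2 * g x - D)
      = (1-θ)/2 * (∫ x in Icc a b, g x) - D * (4*h)^(n+1) := by
    rw [integral_sub (hgint.const_mul _) (integrableOn_const hvolfin.ne),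
      integral_const_mul, setIntegral_const, smul_eq_mul, measureReal_def, hvol]
    ring_nf
  have hIg : (1-θ)/2 * (∫ x in Icc a b, g x) ≤ D * (4*h)^(n+1) := by
    rw [heval, hint0] at hmono
    linarith
  have hIg2 : ∫ x in Icc a b, g x ≤ 2*(D * (4*h)^(n+1))/(1-θ) := by
    rw [le_div_iff₀ h1θ]
    linarith
  -- restrict to the inner cube
  have hcube_box : Icc (fun i => c i - h) (fun i => c i + h) ⊆ Icc a b := by
    apply Icc_subset_Icc
    · intro i; rw [ha_def]; simp only; linarith
    · intro i; rw [hb_def]; simp only; linarith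
  have hcube_mem : ∀ x ∈ Icc (fun i => c i - h) (fun i => c i + h), ∀ i, |x i - c i| ≤ h := by
    intro x hx i
    have h1 : c i - h ≤ x i := hx.1 i
    have h2 : x i ≤ c i + h := hx.2 i
    rw [abs_le]
    constructor <;> [linarith; linarith]
  have hcubeO : Icc (fun i => c i - h) (fun i => c i + h) ⊆ O := by
    intro x hx
    apply hsub
    intro i
    have := hcube_mem x hx i
    linarith
  have hGg : ∀ x ∈ Icc (fun i => c i - h) (fun i => c i + h), G x = g x := by
    intro x hx
    rw [hg_def]
    simp only [if_pos (hcubeO hx)]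
    rw [hη_one x (hcube_mem x hx)]
    ring
  have hcube_int : ∫ x in Icc (fun i => c i - h) (fun i => c i + h), G x
      = ∫ x in Icc (fun i => c i - h) (fun i => c i + h), g x :=
    setIntegral_congr_fun measurableSet_Icc hGg
  have hcube_le : ∫ x in Icc (fun i => c i - h) (fun i => c i + h), g x
      ≤ ∫ x in Icc a b, g x :=
    setIntegral_mono_set hgint (Filter.Eventually.of_forall hg_nonneg)
      (HasSubset.Subset.eventuallyLE hcube_box)
  have hfinal : ∫ x in Icc (fun i => c i - h) (fun i => c i + h), G x
      ≤ 2*(D * (4*h)^(n+1))/(1-θ) := by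
    rw [hcube_int]
    linarith
  have hrhs : 2*(D * (4*h)^(n+1))/(1-θ)
      = (4*(n+1)*K^2/(1-θ)^2) * 4^(n+1) * M^2 * h^(n+1) / h^2 := by
    rw [hD_def, mul_pow]
    field_simp
    ring
  show ∫ x in Icc (fun i => c i - h) (fun i => c i + h), G x
      ≤ (4*(n+1)*K^2/(1-θ)^2) * 4^(n+1) * M^2 * h^(n+1) / h^2
  rw [← hrhs]
  exact hfinal


/-- integral over a finite union is at most the sum of the integrals, for nonneg functions -/
lemma setIntegral_biUnion_le {α : Type*} [MeasurableSpace α] (μ : Measure α)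
    {ι : Type*} [DecidableEq ι] (t : Finset ι) (s : ι → Set α)
    (hms : ∀ j ∈ t, MeasurableSet (s j))
    (f : α → ℝ) (hf : ∀ x, 0 ≤ f x) (hint : ∀ j ∈ t, IntegrableOn f (s j) μ) :
    ∫ x in (⋃ j ∈ t, s j), f x ∂μ ≤ ∑ j ∈ t, ∫ x in s j, f x ∂μ := by
  induction t using Finset.induction_on with
  | empty => simp
  | @insert a t ha ih =>
    rw [Finset.set_biUnion_insert, Finset.sum_insert ha]
    have hIa : IntegrableOn f (s a) μ := hint a (Finset.mem_insert_self a t)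
    have hIU : IntegrableOn f (⋃ j ∈ t, s j) μ :=
      integrableOn_finset_iUnion.2 fun j hj => hint j (Finset.mem_insert_of_mem hj)
    have hU_meas : MeasurableSet (⋃ j ∈ t, s j) :=
      Finset.measurableSet_biUnion t fun j hj => hms j (Finset.mem_insert_of_mem hj)
    have key : ∫ x in s a ∪ ⋃ j ∈ t, s j, f x ∂μ
        ≤ (∫ x in s a, f x ∂μ) + ∫ x in (⋃ j ∈ t, s j), f x ∂μ := by
      rw [← Set.union_diff_self,
        setIntegral_union disjoint_sdiff_self_right (hU_meas.diff (hms a (Finset.mem_insert_self a t)))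
          hIa (hIU.mono_set Set.diff_subset)]
      have h2 : ∫ x in (⋃ j ∈ t, s j) \ s a, f x ∂μ ≤ ∫ x in (⋃ j ∈ t, s j), f x ∂μ :=
        setIntegral_mono_set hIU (Filter.Eventually.of_forall hf)
          (HasSubset.Subset.eventuallyLE Set.diff_subset)
      linarith
    have hih := ih (fun j hj => hms j (Finset.mem_insert_of_mem hj))
      (fun j hj => hint j (Finset.mem_insert_of_mem hj))
    linarith

/-- norm-squared of gradient-style vector in Euclidean space -/
lemma dual_norm_sq {m : ℕ} (f : EuclideanSpace ℝ (Fin m) →L[ℝ] ℝ) :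
    ‖(InnerProductSpace.toDual ℝ (EuclideanSpace ℝ (Fin m))).symm f‖^2
      = ∑ i, (f (EuclideanSpace.single i 1))^2 := by
  set g := (InnerProductSpace.toDual ℝ (EuclideanSpace ℝ (Fin m))).symm f with hg_def
  have hg : ∀ i, g i = f (EuclideanSpace.single i 1) := by
    intro i
    have h1 : (inner ℝ g (EuclideanSpace.single i (1:ℝ)) : ℝ) = f (EuclideanSpace.single i 1) := by
      rw [hg_def]
      simp [InnerProductSpace.toDual_symm_apply]
    rw [← h1]
    simp [EuclideanSpace.inner_single_right]
  rw [EuclideanSpace.norm_eq, Real.sq_sqrt (by positivity)]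
  refine Finset.sum_congr rfl fun i _ => ?_
  rw [Real.norm_eq_abs, sq_abs, hg]

lemma coord_le_norm {m : ℕ} (v : EuclideanSpace ℝ (Fin m)) (i : Fin m) : |v i| ≤ ‖v‖ := by
  rw [EuclideanSpace.norm_eq]
  have h1 : |v i| = Real.sqrt ((v i)^2) := by rw [Real.sqrt_sq_eq_abs]
  rw [h1]
  apply Real.sqrt_le_sqrt
  have := Finset.single_le_sum (f := fun j => ‖v j‖^2)
    (fun j _ => by positivity) (Finset.mem_univ i)
  simpa [Real.norm_eq_abs, sq_abs] using this

lemma norm_le_of_coords {m : ℕ} (v : EuclideanSpace ℝ (Fin m)) (r : ℝ) (hr : 0 ≤ r)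
    (hv : ∀ i, |v i| ≤ r) : ‖v‖ ≤ r * Real.sqrt m := by
  rw [EuclideanSpace.norm_eq]
  have h1 : ∑ i, ‖v i‖^2 ≤ ∑ _i : Fin m, r^2 := by
    apply Finset.sum_le_sum
    intro i _
    rw [Real.norm_eq_abs]
    nlinarith [hv i, abs_nonneg (v i)]
  have h2 : ∑ _i : Fin m, (r^2:ℝ) = m * r^2 := by
    rw [Finset.sum_const, Finset.card_univ, Fintype.card_fin, nsmul_eq_mul]
  calc Real.sqrt (∑ i, ‖v i‖^2) ≤ Real.sqrt (m * r^2) := by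
        apply Real.sqrt_le_sqrt; rw [← h2]; exact h1
    _ = r * Real.sqrt m := by
        rw [show (m:ℝ) * r^2 = (r^2) * m by ring, Real.sqrt_mul (by positivity)]
        rw [Real.sqrt_sq hr]

end CaccAux


open CaccAux

/-- The Euclidean Laplacian: sum of second partial derivatives. -/
noncomputable def lap {m : ℕ} (u : EuclideanSpace ℝ (Fin m) → ℝ)
    (x : EuclideanSpace ℝ (Fin m)) : ℝ :=
  ∑ i : Fin m, fderiv ℝ (fun y => fderiv ℝ u y (EuclideanSpace.single i 1)) x
    (EuclideanSpace.single i 1)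

theorem stmt15 {n : ℕ} (Ω : Set (EuclideanSpace ℝ (Fin (n + 1)))) (hΩ : IsOpen Ω)
    (u : EuclideanSpace ℝ (Fin (n + 1)) → ℝ) (hu : ContDiffOn ℝ 2 u Ω)
    (θ : ℝ) (hθ0 : 0 < θ) (hθ1 : θ < 1)
    (M : ℝ) (hM : ∀ x ∈ Ω, |u x| ≤ M)
    (hcond : ∀ x ∈ Ω, |u x * lap u x| ≤ θ * ‖gradient u x‖ ^ 2) :
    ∃ C > 0, ∀ (z : EuclideanSpace ℝ (Fin (n + 1))) (r : ℝ), 0 < r →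
      closedBall z (2 * r) ⊆ Ω →
      (∫ w in ball z r, ‖gradient u w‖ ^ 2) ≤ C * r ^ ((n : ℝ) - 1) * M ^ 2 ∧
      ⨍ w in ball z r, ‖gradient u w‖ ^ 2 ≤ C * M ^ 2 / r ^ 2 := by
  classical
  obtain ⟨K, hK0, hKb⟩ := CaccAux.exists_K (n+1)
  have h1θ : 0 < 1 - θ := by linarith
  -- the transfer to coordinates
  set ℓ := EuclideanSpace.equiv (Fin (n+1)) ℝ with hℓ_def
  set W : (Fin (n+1) → ℝ) → ℝ := u ∘ ⇑ℓ.symm with hW_def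
  set O : Set (Fin (n+1) → ℝ) := ⇑ℓ.symm ⁻¹' Ω with hO_def
  have hO : IsOpen O := hΩ.preimage ℓ.symm.continuous
  have hWC : ContDiffOn ℝ 2 W O :=
    hu.comp (ℓ.symm.contDiff.contDiffOn) (fun y hy => hy)
  have hpd_eq : ∀ (y : Fin (n+1) → ℝ) (i : Fin (n+1)),
      fderiv ℝ W y (Pi.single i 1) = fderiv ℝ u (ℓ.symm y) (EuclideanSpace.single i 1) := by
    intro y i
    rw [hW_def, ContinuousLinearEquiv.comp_right_fderiv]
    rfl
  have hpd_fun : ∀ i : Fin (n+1), (fun y => fderiv ℝ W y (Pi.single i 1))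
      = (fun x' => fderiv ℝ u x' (EuclideanSpace.single i 1)) ∘ ⇑ℓ.symm :=
    fun i => funext fun y => hpd_eq y i
  have hlap : ∀ y : Fin (n+1) → ℝ,
      (∑ i, fderiv ℝ (fun y' => fderiv ℝ W y' (Pi.single i 1)) y (Pi.single i 1))
        = lap u (ℓ.symm y) := by
    intro y
    unfold lap
    refine Finset.sum_congr rfl fun i _ => ?_
    rw [hpd_fun i, ContinuousLinearEquiv.comp_right_fderiv]
    rfl
  have hGrad : ∀ x : EuclideanSpace ℝ (Fin (n+1)),
      ‖gradient u x‖^2 = ∑ i, (fderiv ℝ W (ℓ x) (Pi.single i 1))^2 := by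
    intro x
    have h1 : ∀ i : Fin (n+1), fderiv ℝ W (ℓ x) (Pi.single i 1)
        = fderiv ℝ u x (EuclideanSpace.single i 1) := by
      intro i
      rw [hpd_eq]
      try congr 1
      try exact ℓ.symm_apply_apply x
    rw [show gradient u x
        = (InnerProductSpace.toDual ℝ (EuclideanSpace ℝ (Fin (n+1)))).symm (fderiv ℝ u x)
        from rfl, dual_norm_sq]
    exact (Finset.sum_congr rfl fun i _ => by rw [h1 i]).symm
  -- transferred hypotheses
  have hMO : ∀ y ∈ O, |W y| ≤ M := fun y hy => hM _ hy
  have hcondO : ∀ y ∈ O,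
      |W y * ∑ i, fderiv ℝ (fun y' => fderiv ℝ W y' (Pi.single i 1)) y (Pi.single i 1)|
        ≤ θ * ∑ i, (fderiv ℝ W y (Pi.single i 1))^2 := by
    intro y hy
    rw [hlap y]
    have h2 := hcond (ℓ.symm y) hy
    have h3 := hGrad (ℓ.symm y)
    rw [ℓ.apply_symm_apply] at h3
    rw [← h3]
    exact h2
  -- the pi-coordinate gradient-squared function
  set Gpi : (Fin (n+1) → ℝ) → ℝ := fun y => ∑ i, (fderiv ℝ W y (Pi.single i 1))^2 with hGpi_def
  have hGpi_nonneg : ∀ y, 0 ≤ Gpi y := fun y => Finset.sum_nonneg fun i _ => sq_nonneg _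
  have hGpiCont : ContinuousOn Gpi O := by
    have hfd1 : ContDiffOn ℝ 1 (fderiv ℝ W) O := hWC.fderiv_of_isOpen hO (by norm_num)
    apply continuousOn_finset_sum
    intro i _
    exact ((hfd1.clm_apply contDiffOn_const).continuousOn).pow 2
  -- the measurable equivalence
  set T := (MeasurableEquiv.toLp 2 (Fin (n+1) → ℝ)).symm with hT_def
  have hTmp : MeasurePreserving (⇑T) volume volume :=
    EuclideanSpace.volume_preserving_symm_measurableEquiv_toLp (Fin (n+1))
  have hTe : ∀ x : EuclideanSpace ℝ (Fin (n+1)), T x = ℓ x := fun x => rfl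
  -- covering of the unit ball
  set m1 : ℝ := Real.sqrt (n+1) with hm1_def
  have hm1 : 1 ≤ m1 := by
    rw [hm1_def]
    have hsq : Real.sqrt ((n:ℝ)+1) ^ 2 = (n:ℝ)+1 := Real.sq_sqrt (by positivity)
    nlinarith [Real.sqrt_nonneg ((n:ℝ)+1)]
  have hm1pos : 0 < m1 := lt_of_lt_of_le one_pos hm1
  set κ : ℝ := 2/(3*m1) with hκ_def
  have hκpos : 0 < κ := by
    rw [hκ_def]
    exact div_pos (by norm_num) (mul_pos (by norm_num) hm1pos)
  have hκle : κ ≤ 1 := by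
    rw [hκ_def, div_le_one (by positivity)]
    linarith
  obtain ⟨t0, ht0sub, ht0fin, ht0cov⟩ :=
    (isCompact_closedBall (0 : EuclideanSpace ℝ (Fin (n+1))) 1).finite_cover_balls hκpos
  set tf := ht0fin.toFinset with htf_def
  have htf_mem : ∀ j, j ∈ tf ↔ j ∈ t0 := fun j => ht0fin.mem_toFinset
  -- constants
  set CC : ℝ := (4*(n+1)*K^2/(1-θ)^2) * 4^(n+1) with hCC_def
  have hCC0 : 0 < CC := by
    rw [hCC_def]
    have : (0:ℝ) < (n:ℝ)+1 := by positivity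
    positivity
  set B : ℝ := (tf.card : ℝ) * CC * κ^(n+1) / κ^2 + 1 with hB_def
  have hB1 : 1 ≤ B := by
    rw [hB_def]
    have : (0:ℝ) ≤ (tf.card : ℝ) * CC * κ^(n+1) / κ^2 := by positivity
    linarith
  have hB0 : 0 < B := lt_of_lt_of_le one_pos hB1
  set κ0 : ℝ := (volume (ball (0 : EuclideanSpace ℝ (Fin (n+1))) 1)).toReal with hκ0_def
  have hκ0pos : 0 < κ0 := by
    rw [hκ0_def]
    exact ENNReal.toReal_pos (measure_ball_pos volume _ one_pos).ne' measure_ball_lt_top.ne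
  have hm1ne : m1 ≠ 0 := hm1pos.ne'
  have hκne : κ ≠ 0 := hκpos.ne'
  have hκ0ne : κ0 ≠ 0 := hκ0pos.ne'
  clear_value m1 κ CC B κ0
  refine ⟨B + B/κ0, by exact add_pos hB0 (div_pos hB0 hκ0pos), ?_⟩
  intro z r hr hball
  have hM0 : 0 ≤ M := by
    have hz : z ∈ Ω := hball (mem_closedBall_self (by linarith))
    exact le_trans (abs_nonneg _) (hM z hz)
  set h : ℝ := κ * r with hh_def
  have hh : 0 < h := by rw [hh_def]; positivity
  have hhr : h ≤ r := by
    rw [hh_def]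
    nlinarith
  -- per-ball Caccioppoli bound
  have hkey : ∀ j ∈ tf, ∫ w in ball (z + r • j) h, ‖gradient u w‖^2
      ≤ CC * M^2 * h^(n+1) / h^2 := by
    intro j hj
    have hjball : ‖j‖ ≤ 1 := by
      have := ht0sub ((htf_mem j).1 hj)
      rwa [mem_closedBall, dist_zero_right] at this
    set cj := z + r • j with hcj_def
    have hcjz : ‖cj - z‖ ≤ r := by
      rw [hcj_def]
      rw [show z + r • j - z = r • j by abel]
      rw [norm_smul, Real.norm_eq_abs, abs_of_pos hr]
      nlinarith
    -- the cube condition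
    have hsubO : {x : Fin (n+1) → ℝ | ∀ i, |x i - ℓ cj i| ≤ 3/2 * h} ⊆ O := by
      intro x hx
      have hco : ∀ i, |(ℓ.symm x - cj) i| ≤ 3/2*h := by
        intro i
        have : (ℓ.symm x - cj) i = x i - ℓ cj i := rfl
        rw [this]
        exact hx i
      have hnorm : ‖ℓ.symm x - cj‖ ≤ (3/2*h) * m1 := by
        have h9 := norm_le_of_coords (ℓ.symm x - cj) (3/2*h) (by positivity) hco
        rwa [show ((n+1 : ℕ) : ℝ) = (n:ℝ)+1 by push_cast; ring, ← hm1_def] at h9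
      have hhm : (3/2*h) * m1 = r := by
        rw [hh_def, hκ_def]
        field_simp
        try ring
      rw [hhm] at hnorm
      show ℓ.symm x ∈ Ω
      apply hball
      rw [mem_closedBall, dist_eq_norm]
      calc ‖ℓ.symm x - z‖ = ‖(ℓ.symm x - cj) + (cj - z)‖ := by abel_nf
        _ ≤ ‖ℓ.symm x - cj‖ + ‖cj - z‖ := norm_add_le _ _
        _ ≤ r + r := add_le_add hnorm hcjz
        _ = 2 * r := by ring
    -- core estimate
    have hcore := CaccAux.core O hO W hWC θ M K hθ0 hθ1 hM0 hMO hK0 hKb hcondO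
      (fun i => ℓ cj i) h hh (by
        intro x hx
        exact hsubO hx)
    -- move the integral to pi coordinates
    have hIcc : T '' (ball cj h) ⊆
        Icc (fun i => ℓ cj i - h) (fun i => ℓ cj i + h) := by
      rintro y ⟨w, hw, rfl⟩
      rw [mem_ball, dist_eq_norm] at hw
      constructor <;> intro i
      · have := coord_le_norm (w - cj) i
        have h6 : (w - cj) i = T w i - ℓ cj i := rfl
        rw [h6] at this
        have := (abs_le.1 (le_trans this hw.le)).1
        simp only
        linarith
      · have := coord_le_norm (w - cj) i
        have h6 : (w - cj) i = T w i - ℓ cj i := rfl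
        rw [h6] at this
        have := (abs_le.1 (le_trans this hw.le)).2
        simp only
        linarith
    have hIccO : Icc (fun i => ℓ cj i - h) (fun i => ℓ cj i + h) ⊆ O := by
      intro x hx
      apply hsubO
      intro i
      have h1 : ℓ cj i - h ≤ x i := hx.1 i
      have h2 : x i ≤ ℓ cj i + h := hx.2 i
      rw [abs_le]
      constructor <;> [linarith; linarith]
    have hGpiInt : IntegrableOn Gpi (Icc (fun i => ℓ cj i - h) (fun i => ℓ cj i + h)) :=
      (hGpiCont.mono hIccO).integrableOn_compact isCompact_Icc
    calc ∫ w in ball cj h, ‖gradient u w‖^2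
        = ∫ w in ball cj h, Gpi (T w) := by
          refine setIntegral_congr_fun measurableSet_ball fun w _ => ?_
          rw [hGrad w]
          rfl
      _ = ∫ y in T '' (ball cj h), Gpi y :=
          (hTmp.setIntegral_image_emb T.measurableEmbedding Gpi (ball cj h)).symm
      _ ≤ ∫ y in Icc (fun i => ℓ cj i - h) (fun i => ℓ cj i + h), Gpi y :=
          setIntegral_mono_set hGpiInt (Filter.Eventually.of_forall hGpi_nonneg)
            (HasSubset.Subset.eventuallyLE hIcc)
      _ ≤ (4*(n+1)*K^2/(1-θ)^2) * 4^(n+1) * M^2 * h^(n+1) / h^2 := hcore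
      _ = CC * M^2 * h^(n+1) / h^2 := by rw [hCC_def]
  -- cover the ball
  have hcover : ball z r ⊆ ⋃ j ∈ tf, ball (z + r • j) h := by
    intro w hw
    rw [mem_ball, dist_eq_norm] at hw
    have hmem : r⁻¹ • (w - z) ∈ closedBall (0 : EuclideanSpace ℝ (Fin (n+1))) 1 := by
      rw [mem_closedBall, dist_zero_right, norm_smul, Real.norm_eq_abs,
        abs_of_pos (inv_pos.2 hr)]
      have h5 : r⁻¹ * ‖w - z‖ ≤ r⁻¹ * r :=
        mul_le_mul_of_nonneg_left hw.le (inv_pos.2 hr).le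
      rwa [inv_mul_cancel₀ hr.ne'] at h5
    rcases mem_iUnion₂.1 (ht0cov hmem) with ⟨j, hj, hjb⟩
    apply mem_iUnion₂.2
    refine ⟨j, (htf_mem j).2 hj, ?_⟩
    rw [mem_ball, dist_eq_norm]
    have he : w - (z + r • j) = r • (r⁻¹ • (w - z) - j) := by
      rw [smul_sub, smul_smul, mul_inv_cancel₀ hr.ne', one_smul]
      abel
    rw [he, norm_smul, Real.norm_eq_abs, abs_of_pos hr, hh_def]
    rw [mem_ball, dist_eq_norm] at hjb
    have h9 : r * ‖r⁻¹ • (w - z) - j‖ < r * κ := mul_lt_mul_of_pos_left hjb hr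
    linarith
  -- continuity/integrability of the gradient square
  have hgradCont : ContinuousOn (fun w => ‖gradient u w‖ ^ 2) Ω := by
    have hfd : ContinuousOn (fderiv ℝ u) Ω := hu.continuousOn_fderiv_of_isOpen hΩ (by norm_num)
    have h6 : ContinuousOn (fun x =>
        (InnerProductSpace.toDual ℝ (EuclideanSpace ℝ (Fin (n+1)))).symm (fderiv ℝ u x)) Ω :=
      (LinearIsometryEquiv.continuous _).comp_continuousOn hfd
    exact (h6.norm).pow 2
  have hint_balls : ∀ j ∈ tf, IntegrableOn (fun w => ‖gradient u w‖ ^ 2)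
      (ball (z + r • j) h) := by
    intro j hj
    have hjn : ‖j‖ ≤ 1 := by
      have := ht0sub ((htf_mem j).1 hj)
      rwa [mem_closedBall, dist_zero_right] at this
    have hsub2 : closedBall (z + r • j) h ⊆ Ω := by
      intro w hw
      apply hball
      rw [mem_closedBall, dist_eq_norm] at hw ⊢
      have h7 : ‖r • j‖ ≤ r := by
        rw [norm_smul, Real.norm_eq_abs, abs_of_pos hr]
        nlinarith
      calc ‖w - z‖ = ‖(w - (z + r • j)) + r • j‖ := by abel_nf
        _ ≤ ‖w - (z + r • j)‖ + ‖r • j‖ := norm_add_le _ _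
        _ ≤ h + r := add_le_add hw h7
        _ ≤ 2 * r := by linarith
    exact ((hgradCont.mono hsub2).integrableOn_compact (isCompact_closedBall _ _)).mono_set
      ball_subset_closedBall
  -- sum it all up
  have hIle : ∫ w in ball z r, ‖gradient u w‖ ^ 2
      ≤ (tf.card : ℝ) * (CC * M^2 * h^(n+1) / h^2) := by
    have h1 : ∫ w in ball z r, ‖gradient u w‖ ^ 2
        ≤ ∫ w in ⋃ j ∈ tf, ball (z + r • j) h, ‖gradient u w‖ ^ 2 := by
      apply setIntegral_mono_set (integrableOn_finset_iUnion.2 hint_balls)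
        (Filter.Eventually.of_forall fun w => by positivity)
        (HasSubset.Subset.eventuallyLE hcover)
    have h2 := CaccAux.setIntegral_biUnion_le volume tf (fun j => ball (z + r • j) h)
      (fun j _ => measurableSet_ball) (fun w => ‖gradient u w‖ ^ 2)
      (fun w => by positivity) hint_balls
    have h3 : ∑ j ∈ tf, ∫ w in ball (z + r • j) h, ‖gradient u w‖ ^ 2
        ≤ ∑ _j ∈ tf, CC * M^2 * h^(n+1) / h^2 := Finset.sum_le_sum hkey
    rw [Finset.sum_const, nsmul_eq_mul] at h3
    linarith
  have hX0 : (0:ℝ) ≤ r^(n+1)/r^2 := by positivity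
  have hcoef : (tf.card : ℝ) * (CC * M^2 * h^(n+1) / h^2)
      = ((tf.card : ℝ) * CC * κ^(n+1) / κ^2) * M^2 * (r^(n+1)/r^2) := by
    rw [hh_def]
    field_simp
    ring
  have hIle2 : ∫ w in ball z r, ‖gradient u w‖ ^ 2 ≤ B * M^2 * (r^(n+1)/r^2) := by
    rw [hcoef] at hIle
    have hcle : (tf.card : ℝ) * CC * κ^(n+1) / κ^2 ≤ B := by
      rw [hB_def]
      linarith
    calc ∫ w in ball z r, ‖gradient u w‖ ^ 2
        ≤ ((tf.card : ℝ) * CC * κ^(n+1) / κ^2) * M^2 * (r^(n+1)/r^2) := hIle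
      _ ≤ B * M^2 * (r^(n+1)/r^2) := by
        apply mul_le_mul_of_nonneg_right _ hX0
        exact mul_le_mul_of_nonneg_right hcle (sq_nonneg M)
  have hrpow : r ^ ((n : ℝ) - 1) = r^(n+1)/r^2 := by
    have h1 : ((n:ℝ) - 1) = ((n+1 : ℕ) : ℝ) - ((2:ℕ):ℝ) := by push_cast; ring
    rw [h1, Real.rpow_sub hr, Real.rpow_natCast, Real.rpow_natCast]
  constructor
  · rw [hrpow]
    calc ∫ w in ball z r, ‖gradient u w‖ ^ 2 ≤ B * M^2 * (r^(n+1)/r^2) := hIle2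
      _ = B * (r^(n+1)/r^2) * M^2 := by ring
      _ ≤ (B + B/κ0) * (r^(n+1)/r^2) * M^2 := by
        have h8 : (0:ℝ) ≤ B/κ0 := div_nonneg hB0.le hκ0pos.le
        apply mul_le_mul_of_nonneg_right _ (sq_nonneg M)
        exact mul_le_mul_of_nonneg_right (by linarith) hX0
  · rw [setAverage_eq, smul_eq_mul]
    have hvol : (volume (ball z r)).toReal = r^(n+1) * κ0 := by
      rw [Measure.addHaar_ball volume z hr.le, ENNReal.toReal_mul,
        ENNReal.toReal_ofReal (by positivity), hκ0_def]
      congr 1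
      rw [finrank_euclideanSpace_fin]
    rw [measureReal_def, hvol]
    calc (r^(n+1) * κ0)⁻¹ * ∫ w in ball z r, ‖gradient u w‖ ^ 2
        ≤ (r^(n+1) * κ0)⁻¹ * (B * M^2 * (r^(n+1)/r^2)) :=
          mul_le_mul_of_nonneg_left hIle2 (inv_nonneg.2 (mul_nonneg (by positivity) hκ0pos.le))
      _ = (B/κ0) * M^2 / r^2 := by
          field_simp
      _ ≤ (B + B/κ0) * M^2 / r^2 := by
          gcongr
          linarith
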